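/- The binary sequence P : Nat.Partrec.Code → Bool defined by P c = true if the code c is total (∀ n, (c.eval n).Dom) and P c = false otherwise — i.e., P c = decide that c is satisfactory — is not a computable function. -/

import Mathlib

open scoped Classical

/-- Turing's sequence P: `P c = true` iff the code `c` is satisfactory (total).
This function is definable but not computable (Turing's claim (xix)). -/
theorem P_not_computable :
    ¬ Computable (fun c : Nat.Partrec.Code => decide (∀ n : ℕ, (c.eval n).Dom)) := by
  intro h
  apply ComputablePred.halting_problem 0
  have hc : Computable fun c : Nat.Partrec.Code => c.comp (Nat.Partrec.Code.const 0) :=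
    (Nat.Partrec.Code.primrec₂_comp.comp Primrec.id
      (Primrec.const (Nat.Partrec.Code.const 0))).to_comp
  refine ⟨fun c => Classical.dec _, ?_⟩
  refine (h.comp hc).of_eq fun c => ?_
  apply decide_eq_decide.mpr
  have key : ∀ n : ℕ, (c.comp (Nat.Partrec.Code.const 0)).eval n = c.eval 0 := by
    intro n
    show ((pure 0 : ℕ →. ℕ) n).bind c.eval = c.eval 0; exact Part.bind_some _ _
  constructor
  · intro hall; show (c.eval 0).Dom; rw [← key 0]; exact hall 0
  · intro hd n; rw [key n]; exact hd
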